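/- Let v = v₁ * v₂ be a nonempty m-Dyck path, with v₁ and v₂ nonempty m-Dyck paths. (i) If v ⋖ w is a cover relation of the greedy m-Tamari order, then either w = w₁ * v₂ for some w₁ with v₁ ⋖ w₁, or w = v₁ * w₂ for some w₂ with v₂ ⋖ w₂. (ii) Conversely, every cover relation v₁ ⋖ w₁ gives a cover relation v₁ * v₂ ⋖ w₁ * v₂, and every cover relation v₂ ⋖ w₂ gives a cover relation v₁ * v₂ ⋖ v₁ * w₂. (iii) Consequently, the upper ideal {w : v ≤ w} in the greedy order equals {w₁ * w₂ : v₁ ≤ w₁ and v₂ ≤ w₂}. -/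

import Mathlib

/-! Words over `Bool` encode lattice paths: `true` = up step (letter 1),
`false` = down step (letter 0). -/

/-- `w` is an `m`-Dyck word: the number of 0's is `m` times the number of 1's,
and every prefix `p` satisfies `m·|p|₁ ≥ |p|₀`.  (The empty word is allowed;
an `m`-Dyck path of size `n` is an `m`-Dyck word with `n` letters 1.) -/
def IsDyck (m : ℕ) (w : List Bool) : Prop :=
  w.count false = m * w.count true ∧
  ∀ p : List Bool, p <+: w → p.count false ≤ m * p.count true

/-- Cover relation of the greedy `m`-Tamari order: swap a valley's down step with
the *longest* Dyck factor that follows it. -/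
def GreedyCover (m : ℕ) (w w' : List Bool) : Prop :=
  ∃ u d v : List Bool, d ≠ [] ∧ IsDyck m d ∧
    w = u ++ false :: (d ++ v) ∧
    w' = u ++ d ++ false :: v ∧
    ∀ d' : List Bool, d' <+: d ++ v → IsDyck m d' → d'.length ≤ d.length

/-- The greedy `m`-Tamari order (reflexive-transitive closure of the cover relation). -/
def GreedyLe (m : ℕ) : List Bool → List Bool → Prop :=
  Relation.ReflTransGen (GreedyCover m)

/-- Cover relation of the ordinary `m`-Tamari order: swap a valley's down step with
the *shortest nonempty* Dyck factor that follows it. -/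
def OrdCover (m : ℕ) (w w' : List Bool) : Prop :=
  ∃ u d v : List Bool, d ≠ [] ∧ IsDyck m d ∧
    w = u ++ false :: (d ++ v) ∧
    w' = u ++ d ++ false :: v ∧
    ∀ d' : List Bool, d' <+: d ++ v → IsDyck m d' → d' ≠ [] → d.length ≤ d'.length

/-- The ordinary `m`-Tamari order. -/
def OrdLe (m : ℕ) : List Bool → List Bool → Prop :=
  Relation.ReflTransGen (OrdCover m)

/-- The word `1·0^m` (a single peak), unit of the monoid `(D_m, *)`. -/
def peakWord (m : ℕ) : List Bool := true :: List.replicate m false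

/-- Length of the final descent: the longest suffix of the form `0^k`. -/
def finalDescent (w : List Bool) : ℕ := (w.reverse.takeWhile (fun b => !b)).length

/-- The product `w₁ * w₂` on nonempty `m`-Dyck words: replace the rightmost peak
(the last up step together with the `m` down steps following it) of `w₁` by `w₂`. -/
def star (m : ℕ) (w₁ w₂ : List Bool) : List Bool :=
  w₁.take (w₁.length - (finalDescent w₁ + 1)) ++ w₂ ++
    List.replicate (finalDescent w₁ - m) false

/-- Delete the last peak (the last up step and the `m` down steps following it). -/
def delPeak (m : ℕ) (w : List Bool) : List Bool :=
  w.take (w.length - (finalDescent w + 1)) ++ List.replicate (finalDescent w - m) false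

/-- `D(w₀, …, w_m) = 1 (w₀ 0) (w₁ 0) ⋯ (w_{m-1} 0) w_m` : the canonical
decomposition of nonempty `m`-Dyck words (components indexed by `Fin (m+1)`). -/
def Dpath (m : ℕ) (ws : Fin (m+1) → List Bool) : List Bool :=
  true :: ((List.ofFn fun j : Fin m => ws j.castSucc ++ [false]).flatten ++ ws (Fin.last m))

/-- Generators of the free monoid `(D_m, *)` : the words
`D(w₁,…,w_{i−1}, 1·0^m, ∅,…,∅)` with Dyck (possibly empty) components before
position `i`. -/
def IsGenerator (m : ℕ) (g : List Bool) : Prop :=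
  ∃ i : Fin (m+1), ∃ ws : Fin (m+1) → List Bool,
    (∀ j, IsDyck m (ws j)) ∧ ws i = peakWord m ∧
    (∀ j : Fin (m+1), i < j → ws j = []) ∧ g = Dpath m ws

/-- A prime (no contact) nonempty `m`-Dyck word: no proper nonempty prefix `p`
satisfies `m·|p|₁ = |p|₀`. -/
def IsPrimePath (m : ℕ) (w : List Bool) : Prop :=
  IsDyck m w ∧ w ≠ [] ∧
  ∀ p : List Bool, p <+: w → p ≠ [] → p ≠ w → p.count false ≠ m * p.count true



/-- Height of a path. -/
def hgt (m : ℕ) (w : List Bool) : ℤ := m * w.count true - w.count false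

lemma hgt_append (m : ℕ) (x y : List Bool) : hgt m (x ++ y) = hgt m x + hgt m y := by
  simp [hgt, List.count_append]; ring

@[simp] lemma hgt_nil (m : ℕ) : hgt m [] = 0 := by simp [hgt]

@[simp] lemma hgt_replicate_false (m k : ℕ) : hgt m (List.replicate k false) = -k := by
  simp [hgt, List.count_replicate]

@[simp] lemma hgt_singleton_false (m : ℕ) : hgt m [false] = -1 := by simp [hgt]

@[simp] lemma hgt_singleton_true (m : ℕ) : hgt m [true] = m := by simp [hgt]

lemma hgt_cons (m : ℕ) (b : Bool) (w : List Bool) :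
    hgt m (b :: w) = hgt m [b] + hgt m w := by
  simpa using hgt_append m [b] w

@[simp] lemma hgt_cons_true (m : ℕ) (w : List Bool) :
    hgt m (true :: w) = m + hgt m w := by
  rw [hgt_cons]; simp

@[simp] lemma hgt_cons_false (m : ℕ) (w : List Bool) :
    hgt m (false :: w) = hgt m w - 1 := by
  rw [hgt_cons]; simp; ring

lemma isDyck_iff (m : ℕ) (w : List Bool) :
    IsDyck m w ↔ hgt m w = 0 ∧ ∀ p : List Bool, p <+: w → 0 ≤ hgt m p := by
  unfold IsDyck hgt
  constructor
  · rintro ⟨h1, h2⟩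
    refine ⟨by push_cast [h1]; ring, fun p hp => ?_⟩
    have := h2 p hp; push_cast; omega
  · rintro ⟨h1, h2⟩
    constructor
    · have : ((w.count false : ℤ)) = m * w.count true := by omega
      exact_mod_cast this
    · intro p hp; have := h2 p hp
      have : ((p.count false : ℤ)) ≤ m * p.count true := by omega
      exact_mod_cast this

lemma IsDyck.hgt_eq {m : ℕ} {w : List Bool} (h : IsDyck m w) : hgt m w = 0 :=
  ((isDyck_iff m w).1 h).1

lemma IsDyck.hgt_prefix {m : ℕ} {w p : List Bool} (h : IsDyck m w) (hp : p <+: w) :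
    0 ≤ hgt m p := ((isDyck_iff m w).1 h).2 p hp

lemma prefix_replicate {q : List Bool} {k : ℕ} (h : q <+: List.replicate k false) :
    q = List.replicate q.length false := by
  have := List.eq_replicate_of_mem (l := q) (a := false) ?_
  · simpa using this
  · intro b hb; have := h.subset hb; simpa using (List.eq_of_mem_replicate this)

/-- Dyck prefixes of `s ++ 0^K` with `hgt s ≤ 0` are prefixes of `s`. -/
lemma dyck_prefix_of_nonpos {m : ℕ} {s d' : List Bool} {K : ℕ} (hs : hgt m s ≤ 0)
    (hd' : IsDyck m d') (hp : d' <+: s ++ List.replicate K false) : d' <+: s := by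
  rcases le_or_gt d'.length s.length with hl | hl
  · exact List.prefix_of_prefix_length_le hp (List.prefix_append _ _) hl
  · exfalso
    have hsp : s <+: d' :=
      List.prefix_of_prefix_length_le (List.prefix_append _ _) hp hl.le
    obtain ⟨q, rfl⟩ := hsp
    have hq : q <+: List.replicate K false := by
      rw [List.prefix_append_right_inj] at hp; exact hp
    have hq' := prefix_replicate hq
    have h0 := hd'.hgt_eq
    rw [hgt_append, hq', hgt_replicate_false] at h0
    have : 0 < q.length := by
      have := List.length_append (as := s) (bs := q) ▸ hl; omega
    omega

lemma count_false_add_count_true (w : List Bool) :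
    w.count false + w.count true = w.length := by
  induction w with
  | nil => simp
  | cons b t ih => cases b <;> simp [List.count_cons] <;> omega

lemma finalDescent_peak (x : List Bool) (k : ℕ) :
    finalDescent (x ++ true :: List.replicate k false) = k := by
  unfold finalDescent
  rw [List.reverse_append, List.reverse_cons, List.reverse_replicate]
  rw [List.append_assoc, List.takeWhile_append]
  have h1 : List.takeWhile (fun b => !b) (List.replicate k false) = List.replicate k false := by
    apply List.takeWhile_eq_self_iff.2 ?_
    intro a ha; simpa using List.eq_of_mem_replicate ha
  rw [h1]
  simp

lemma star_peak (m : ℕ) (x w₂ : List Bool) (k : ℕ) :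
    star m (x ++ true :: List.replicate k false) w₂
      = x ++ w₂ ++ List.replicate (k - m) false := by
  unfold _root_.star
  rw [finalDescent_peak]
  have hl : (x ++ true :: List.replicate k false).length = x.length + (k + 1) := by
    simp [List.length_replicate]
  rw [hl]
  have : x.length + (k + 1) - (k + 1) = x.length := by omega
  rw [this, List.take_left' rfl]

lemma split_trailing (w : List Bool) :
    (∃ k, w = List.replicate k false) ∨
    ∃ a k, w = a ++ true :: List.replicate k false := by
  induction w using List.reverseRecOn with
  | nil => exact Or.inl ⟨0, rfl⟩
  | append_singleton ys b ih =>
    cases b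
    · rcases ih with ⟨k, rfl⟩ | ⟨a, k, rfl⟩
      · exact Or.inl ⟨k + 1, by rw [List.replicate_add]; rfl⟩
      · refine Or.inr ⟨a, k + 1, ?_⟩
        rw [List.replicate_add, List.append_assoc]
        simp
    · exact Or.inr ⟨ys, 0, by simp⟩

/-- Every nonempty Dyck word ends with `true :: 0^k`. -/
lemma exists_peak_suffix {m : ℕ} {w : List Bool} (h : IsDyck m w) (hn : w ≠ []) :
    ∃ a k, w = a ++ true :: List.replicate k false := by
  rcases split_trailing w with ⟨k, rfl⟩ | hok
  · exfalso
    have h1 : (List.replicate k false).count true = 0 := by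
      rw [List.count_replicate]; simp
    have h2 := h.1
    have h3 := count_false_add_count_true (List.replicate k false)
    rw [h1, Nat.mul_zero] at h2
    apply hn
    have : k = 0 := by rw [List.length_replicate] at h3; omega
    simp [this]
  · exact hok

lemma prefix_append_cases {α : Type*} {p x y : List α} (h : p <+: x ++ y) :
    p <+: x ∨ ∃ q, p = x ++ q ∧ q <+: y := by
  rcases le_or_gt p.length x.length with hl | hl
  · exact Or.inl (List.prefix_of_prefix_length_le h (List.prefix_append _ _) hl)
  · have hx : x <+: p := List.prefix_of_prefix_length_le (List.prefix_append _ _) h hl.le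
    obtain ⟨q, rfl⟩ := hx
    rw [List.prefix_append_right_inj] at h
    exact Or.inr ⟨q, rfl, h⟩

/-- The head of a nonempty Dyck word is `true`. -/
lemma dyck_head {m : ℕ} {d : List Bool} (h : IsDyck m d) (hn : d ≠ []) :
    ∃ d', d = true :: d' := by
  rcases d with _ | ⟨b, d'⟩
  · exact absurd rfl hn
  · cases b
    · exfalso
      have := h.2 [false] ⟨d', rfl⟩
      simp at this
    · exact ⟨d', rfl⟩

lemma hgt_peak (m k : ℕ) : hgt m (true :: List.replicate k false) = (m : ℤ) - k := by
  rw [hgt_cons]; simp; omega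

/-- Classification of Dyck extensions past `r` into `X ++ 0^K` (`X` Dyck). -/
lemma dyck_ext {m : ℕ} {r q X : List Bool} {K : ℕ} (hX : IsDyck m X)
    (hrq : IsDyck m (r ++ q)) (hq : q <+: X ++ List.replicate K false) :
    (q <+: X ∧ IsDyck m q ∧ hgt m r = 0) ∨
    (∃ i : ℕ, 1 ≤ i ∧ i ≤ K ∧ q = X ++ List.replicate i false ∧ (i : ℤ) = hgt m r) := by
  have hr0 : 0 ≤ hgt m r := hrq.hgt_prefix (List.prefix_append _ _)
  have hsum : hgt m r + hgt m q = 0 := by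
    rw [← hgt_append]; exact hrq.hgt_eq
  rcases le_or_gt q.length X.length with hl | hl
  · left
    have hqX : q <+: X := List.prefix_of_prefix_length_le hq (List.prefix_append _ _) hl
    have hq0 : 0 ≤ hgt m q := hX.hgt_prefix hqX
    have hr' : hgt m r = 0 := by omega
    refine ⟨hqX, (isDyck_iff m q).2 ⟨by omega, fun p hp => hX.hgt_prefix (hp.trans hqX)⟩, hr'⟩
  · right
    have hXq : X <+: q := List.prefix_of_prefix_length_le (List.prefix_append _ _) hq hl.le
    obtain ⟨s, rfl⟩ := hXq
    rw [List.prefix_append_right_inj] at hq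
    have hs := prefix_replicate hq
    refine ⟨s.length, ?_, ?_, by rw [← hs], ?_⟩
    · rw [List.length_append] at hl; omega
    · have := hq.length_le; simpa using this
    · rw [hgt_append, hX.hgt_eq] at hsum
      conv at hsum => rw [hs]
      rw [hgt_replicate_false] at hsum; omega

/-- Classification of nonempty Dyck extensions past `r` into `true :: 0^f`. -/
lemma dyck_ext_peak {m : ℕ} {r q : List Bool} {f : ℕ}
    (hrq : IsDyck m (r ++ q)) (hq : q <+: true :: List.replicate f false) (hqn : q ≠ []) :
    ∃ j : ℕ, j ≤ f ∧ q = true :: List.replicate j false ∧ (j : ℤ) = m + hgt m r := by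
  rcases List.prefix_cons_iff.1 hq with h0 | ⟨s, rfl, hs⟩
  · exact absurd h0 hqn
  · have hsr := prefix_replicate hs
    refine ⟨s.length, by simpa using hs.length_le, by rw [← hsr], ?_⟩
    have hsum : hgt m r + hgt m (true :: s) = 0 := by
      rw [← hgt_append]; exact hrq.hgt_eq
    rw [hgt_cons, hgt_singleton_true] at hsum
    conv at hsum => rw [hsr]
    rw [hgt_replicate_false] at hsum
    omega

/-- Construction: `r ++ X ++ 0^i` is Dyck when `X` is Dyck, prefixes of `r` are
nonnegative, and `i = hgt r`. -/
lemma isDyck_mid {m : ℕ} {r X : List Bool} {i : ℕ} (hX : IsDyck m X)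
    (hr : ∀ p, p <+: r → 0 ≤ hgt m p) (hi : (i : ℤ) = hgt m r) :
    IsDyck m (r ++ X ++ List.replicate i false) := by
  rw [isDyck_iff]
  constructor
  · rw [hgt_append, hgt_append, hX.hgt_eq, hgt_replicate_false]; omega
  · intro p hp
    rw [List.append_assoc] at hp
    rcases prefix_append_cases hp with h | ⟨q, rfl, hq⟩
    · exact hr p h
    · rcases prefix_append_cases hq with h | ⟨s, rfl, hs⟩
      · rw [hgt_append]
        have := hX.hgt_prefix h
        have := hr r List.prefix_rfl
        omega
      · have hsr := prefix_replicate hs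
        have hsl : s.length ≤ i := by simpa using hs.length_le
        have hss : hgt m s = -(s.length : ℤ) := by
          conv_lhs => rw [hsr]
          rw [hgt_replicate_false]
        rw [← List.append_assoc, hgt_append, hgt_append, hX.hgt_eq, hss]
        omega

/-- Construction: `r ++ true :: 0^(m+i)` is Dyck when prefixes of `r` are
nonnegative and `i = hgt r`. -/
lemma isDyck_peakext {m : ℕ} {r : List Bool} {i : ℕ}
    (hr : ∀ p, p <+: r → 0 ≤ hgt m p) (hi : (i : ℤ) = hgt m r) :
    IsDyck m (r ++ true :: List.replicate (m + i) false) := by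
  rw [isDyck_iff]
  constructor
  · rw [hgt_append, hgt_peak]; omega
  · intro p hp
    rcases prefix_append_cases hp with h | ⟨q, rfl, hq⟩
    · exact hr p h
    · rcases List.prefix_cons_iff.1 hq with rfl | ⟨s, rfl, hs⟩
      · simpa using hr r List.prefix_rfl
      · have hsr := prefix_replicate hs
        have hsl : s.length ≤ m + i := by simpa using hs.length_le
        have hss : hgt m s = -(s.length : ℤ) := by
          conv_lhs => rw [hsr]
          rw [hgt_replicate_false]
        rw [hgt_append, hgt_cons, hgt_singleton_true, hss]
        have := hr r List.prefix_rfl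
        omega



lemma GreedyCover.length_eq {m : ℕ} {w w' : List Bool} (h : GreedyCover m w w') :
    w'.length = w.length := by
  obtain ⟨u, d, t, _, _, rfl, rfl, _⟩ := h
  simp; omega

lemma GreedyCover.ne_nil {m : ℕ} {w w' : List Bool} (h : GreedyCover m w w') (hn : w ≠ []) :
    w' ≠ [] := by
  intro h0
  apply hn
  have := h.length_eq
  rw [h0] at this
  exact List.eq_nil_of_length_eq_zero this.symm

lemma GreedyCover.isDyck {m : ℕ} {w w' : List Bool} (hc : GreedyCover m w w')
    (h : IsDyck m w) : IsDyck m w' := by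
  obtain ⟨u, d, t, hdn, hd, rfl, rfl, _⟩ := hc
  rw [isDyck_iff] at h ⊢
  obtain ⟨h0, hpre⟩ := h
  constructor
  · rw [← h0]
    simp [hgt_append]
    ring
  · intro p hp
    rw [List.append_assoc] at hp
    rcases prefix_append_cases hp with hpu | ⟨q, rfl, hq⟩
    · exact hpre p (hpu.trans (List.prefix_append _ _))
    · rcases prefix_append_cases hq with hqd | ⟨s, rfl, hs⟩
      · have h1 : 0 ≤ hgt m u := hpre u (List.prefix_append _ _)
        have h2 : 0 ≤ hgt m q := hd.hgt_prefix hqd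
        rw [hgt_append]; omega
      · rcases List.prefix_cons_iff.1 hs with rfl | ⟨e, rfl, he⟩
        · have h1 : 0 ≤ hgt m u := hpre u (List.prefix_append _ _)
          rw [List.append_nil, hgt_append, hd.hgt_eq]; omega
        · have hw : u ++ false :: (d ++ e) <+: u ++ false :: (d ++ t) := by
            rw [List.prefix_append_right_inj, List.cons_prefix_cons,
              List.prefix_append_right_inj]
            exact ⟨rfl, he⟩
          have := hpre _ hw
          have heq : hgt m (u ++ d ++ false :: e) = hgt m (u ++ false :: (d ++ e)) := by
            simp [hgt_append]
            ring
          rw [← List.append_assoc]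
          omega

/-- Full decomposition of a nonempty Dyck word. -/
lemma dyck_decomp {m : ℕ} {w : List Bool} (hm : 1 ≤ m) (h : IsDyck m w) (hn : w ≠ []) :
    ∃ a F, w = a ++ true :: List.replicate (m + F) false ∧
      hgt m a = (F : ℤ) ∧ finalDescent w = m + F := by
  obtain ⟨a, k, rfl⟩ := exists_peak_suffix h hn
  have h0 := h.hgt_eq
  rw [hgt_append, hgt_peak] at h0
  have ha : 0 ≤ hgt m a := h.hgt_prefix (List.prefix_append _ _)
  have hk : m ≤ k := by omega
  refine ⟨a, k - m, ?_, by push_cast; omega, ?_⟩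
  · rw [Nat.add_sub_cancel' hk]
  · rw [finalDescent_peak]; omega

lemma rep_prefix {α : Type*} (x : α) {i j : ℕ} (h : i ≤ j) :
    List.replicate i x <+: List.replicate j x :=
  ⟨List.replicate (j - i) x, by rw [← List.replicate_add]; congr 1; omega⟩

lemma rep_glue {α : Type*} (x : α) (i j : ℕ) :
    List.replicate i x ++ x :: List.replicate j x = List.replicate (i + j + 1) x := by
  have : i + j + 1 = i + (j + 1) := by omega
  rw [this, List.replicate_add, List.replicate_succ]

lemma rep_split {α : Type*} (x : α) {i j : ℕ} (h : i ≤ j) :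
    List.replicate j x = List.replicate i x ++ List.replicate (j - i) x := by
  rw [← List.replicate_add]; congr 1; omega

/-- After a valley `u ++ 0 ++ s` in a Dyck word, the suffix has nonpositive height. -/
lemma valley_suffix_nonpos {m : ℕ} {u s : List Bool} (h : IsDyck m (u ++ false :: s)) :
    hgt m s ≤ 0 := by
  have h1 : 0 ≤ hgt m (u ++ [false]) := h.hgt_prefix ⟨s, by simp⟩
  have h0 := h.hgt_eq
  rw [hgt_append, hgt_cons_false] at h0
  rw [hgt_append, hgt_singleton_false] at h1
  omega

/-- (ii), right factor: a cover of `v₂` induces a cover of `a ++ v₂ ++ 0^F`. -/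
lemma cover_right {m : ℕ} (a : List Bool) (F : ℕ) {v₂ w₂ : List Bool} (h₂ : IsDyck m v₂)
    (hc : GreedyCover m v₂ w₂) :
    GreedyCover m (a ++ v₂ ++ List.replicate F false) (a ++ w₂ ++ List.replicate F false) := by
  obtain ⟨u, d, t, hdn, hd, hv2, hw2, hmax⟩ := hc
  refine ⟨a ++ u, d, t ++ List.replicate F false, hdn, hd, ?_, ?_, ?_⟩
  · rw [hv2]; simp
  · rw [hw2]; simp
  · intro d' hp hd'
    have hs : hgt m (d ++ t) ≤ 0 := valley_suffix_nonpos (hv2 ▸ h₂)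
    have hp' : d' <+: (d ++ t) ++ List.replicate F false := by
      simpa [List.append_assoc] using hp
    exact hmax d' (dyck_prefix_of_nonpos hs hd' hp') hd'

lemma star_peak' (m : ℕ) (x w₂ : List Bool) (F : ℕ) :
    star m (x ++ true :: List.replicate (m + F) false) w₂
      = x ++ w₂ ++ List.replicate F false := by
  rw [star_peak]
  congr 2
  omega

/-- (ii), left factor: a cover of `v₁ = a ++ 1 ++ 0^(m+F)` induces a cover of
`a ++ v₂ ++ 0^F` with result `star m w₁ v₂`. -/
lemma cover_left {m : ℕ} {a v₂ w₁ : List Bool} {F : ℕ}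
    (h₂ : IsDyck m v₂) (h₂n : v₂ ≠ [])
    (hc : GreedyCover m (a ++ true :: List.replicate (m + F) false) w₁) :
    GreedyCover m (a ++ v₂ ++ List.replicate F false) (star m w₁ v₂) := by
  obtain ⟨u, d, t, hdn, hd, hv1, hw1, hmax⟩ := hc
  obtain ⟨dd, hdd⟩ := dyck_head hd hdn
  rcases List.append_eq_append_iff.1 hv1 with ⟨z, hz1, hz2⟩ | ⟨z, hz1, hz2⟩
  · -- valley inside the final peak: impossible
    exfalso
    rcases z with _ | ⟨b, z'⟩
    · simp at hz2
    · rw [List.cons_append] at hz2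
      injection hz2 with hb hz2'
      have : true ∈ List.replicate (m + F) false := by
        rw [hz2', hdd]; simp
      simpa using List.eq_of_mem_replicate this
  · rcases z with _ | ⟨b, r'⟩
    · simp at hz2
    · rw [List.cons_append] at hz2
      injection hz2 with hb hz2'
      subst hb
      have hr'p : r' <+: d ++ t := ⟨true :: List.replicate (m + F) false, hz2'.symm⟩
      rcases le_or_gt d.length r'.length with hl | hl
      · -- B1 : d within r'
        obtain ⟨z', rfl⟩ : d <+: r' :=
          List.prefix_of_prefix_length_le ⟨t, rfl⟩ hr'p hl
        have ht : t = z' ++ true :: List.replicate (m + F) false := by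
          apply List.append_cancel_left (as := d)
          rw [hz2', List.append_assoc]
        refine ⟨u, d, z' ++ (v₂ ++ List.replicate F false), hdn, hd, ?_, ?_, ?_⟩
        · rw [hz1]; simp
        · rw [hw1, ht]
          have hsh : u ++ d ++ false :: (z' ++ true :: List.replicate (m + F) false)
              = (u ++ d ++ false :: z') ++ true :: List.replicate (m + F) false := by
            simp
          rw [hsh, star_peak']
          simp
        · intro d' hp hd'
          have hp' : d' <+: (d ++ z') ++ (v₂ ++ List.replicate F false) := by
            simpa [List.append_assoc] using hp
          rcases le_or_gt d'.length (d ++ z').length with hl' | hl'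
          · have hd'r : d' <+: d ++ z' :=
              List.prefix_of_prefix_length_le hp' (List.prefix_append _ _) hl'
            exact hmax d' (hd'r.trans hr'p) hd'
          · exfalso
            obtain ⟨q, rfl⟩ : (d ++ z') <+: d' :=
              List.prefix_of_prefix_length_le (List.prefix_append _ _) hp' hl'.le
            rw [List.prefix_append_right_inj] at hp'
            have hrpre : ∀ p, p <+: d ++ z' → 0 ≤ hgt m p :=
              fun p hpp => hd'.hgt_prefix (hpp.trans (List.prefix_append _ _))
            have key : ∀ i : ℕ, i ≤ F → ((i : ℤ) = hgt m (d ++ z')) → False := by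
              intro i hiF hiI
              have hD : IsDyck m ((d ++ z') ++ true :: List.replicate (m + i) false) :=
                isDyck_peakext hrpre hiI
              have hDp : (d ++ z') ++ true :: List.replicate (m + i) false <+: d ++ t := by
                rw [hz2']
                simp only [List.append_assoc, List.cons_append, List.nil_append]
                rw [List.prefix_append_right_inj, List.prefix_append_right_inj,
                  List.cons_prefix_cons]
                exact ⟨rfl, rep_prefix false (by omega)⟩
              have hlen := hmax _ hDp hD
              simp only [List.length_append, List.length_cons, List.length_replicate] at hlen
              omega
            rcases dyck_ext h₂ hd' hp' with ⟨hqv, hqD, hr0⟩ | ⟨i, hi1, hiF, rfl, hiI⟩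
            · exact key 0 (by omega) (by rw [hr0]; simp)
            · exact key i hiF hiI
      · -- B2 : r' proper prefix of d
        obtain ⟨q, rfl⟩ : r' <+: d :=
          List.prefix_of_prefix_length_le hr'p ⟨t, rfl⟩ hl.le
        have hqt : q ++ t = true :: List.replicate (m + F) false := by
          apply List.append_cancel_left (as := r')
          rw [← List.append_assoc]
          exact hz2'
        have hqn : q ≠ [] := by
          intro h0; rw [h0] at hl; simp at hl
        obtain ⟨j, hjf, rfl, hjI⟩ := dyck_ext_peak hd ⟨t, hqt⟩ hqn
        have hr0 : 0 ≤ hgt m r' := hd.hgt_prefix (List.prefix_append _ _)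
        have hjm : m ≤ j := by omega
        set i := j - m with hidef
        have hiI : (i : ℤ) = hgt m r' := by push_cast; omega
        have hiF : i ≤ F := by omega
        have ht : t = List.replicate (F - i) false := by
          rw [List.cons_append] at hqt
          injection hqt with _ h2
          have h3 : List.replicate j false ++ t
              = List.replicate j false ++ List.replicate (m + F - j) false := by
            rw [h2, ← List.replicate_add]
            congr 1
            omega
          have h4 := List.append_cancel_left h3
          rw [h4]
          congr 1
          omega
        have hrpre : ∀ p, p <+: r' → 0 ≤ hgt m p :=
          fun p hpp => hd.hgt_prefix (hpp.trans (List.prefix_append _ _))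
        refine ⟨u, r' ++ v₂ ++ List.replicate i false, List.replicate (F - i) false,
          by simp [h₂n], isDyck_mid h₂ hrpre hiI, ?_, ?_, ?_⟩
        · rw [hz1, rep_split false hiF]
          simp
        · rw [hw1, ht]
          have hsh : u ++ (r' ++ true :: List.replicate j false) ++
              false :: List.replicate (F - i) false
              = (u ++ r') ++ true :: List.replicate (m + (F + 1)) false := by
            have hnum : m + (F + 1) = j + (F - i) + 1 := by omega
            rw [hnum, ← rep_glue]
            simp
          rw [hsh, star_peak']
          have hnum2 : F + 1 = i + (F - i) + 1 := by omega
          rw [hnum2, ← rep_glue]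
          simp
        · intro d' hp hd'
          have hreq : (r' ++ v₂ ++ List.replicate i false) ++ List.replicate (F - i) false
              = r' ++ (v₂ ++ List.replicate F false) := by
            rw [rep_split false hiF]
            simp
          rw [hreq] at hp
          rcases le_or_gt d'.length r'.length with hl' | hl'
          · simp only [List.length_append, List.length_replicate]
            omega
          · obtain ⟨q', rfl⟩ : r' <+: d' :=
              List.prefix_of_prefix_length_le (List.prefix_append _ _) hp hl'.le
            rw [List.prefix_append_right_inj] at hp
            rcases dyck_ext h₂ hd' hp with ⟨hqv, hqD, hr0'⟩ | ⟨i', _, _, rfl, hiI'⟩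
            · have hi0 : i = 0 := by omega
              have hql := hqv.length_le
              simp only [List.length_append, List.length_replicate]
              omega
            · have : i' = i := by omega
              subst this
              simp

/-- (i): any cover of `a ++ v₂ ++ 0^F` acts on one of the two factors. -/
lemma cover_star_cases {m : ℕ} {a v₂ w : List Bool} {F : ℕ}
    (h₂ : IsDyck m v₂) (h₂n : v₂ ≠ [])
    (hc : GreedyCover m (a ++ v₂ ++ List.replicate F false) w) :
    (∃ w₁, GreedyCover m (a ++ true :: List.replicate (m + F) false) w₁ ∧ w = star m w₁ v₂) ∨
    (∃ w₂, GreedyCover m v₂ w₂ ∧ w = a ++ w₂ ++ List.replicate F false) := by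
  obtain ⟨u, d, t, hdn, hd, hv, hw, hmax⟩ := hc
  obtain ⟨dd, hdd⟩ := dyck_head hd hdn
  obtain ⟨vv, hvv⟩ := dyck_head h₂ h₂n
  rw [List.append_assoc] at hv
  rcases List.append_eq_append_iff.1 hv with ⟨z, hz1, hz2⟩ | ⟨z, hz1, hz2⟩
  · -- u = a ++ z ; v₂ ++ rep F = z ++ false :: (d ++ t) : valley in the v₂ part
    right
    rcases List.append_eq_append_iff.1 hz2 with ⟨y, hy1, hy2⟩ | ⟨y, hy1, hy2⟩
    · -- rep F = y ++ false :: (d ++ t) : impossible since d starts with true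
      exfalso
      have : true ∈ List.replicate F false := by
        rw [hy2, hdd]; simp
      simpa using List.eq_of_mem_replicate this
    · -- v₂ = z ++ y ; false :: (d ++ t) = y ++ rep F
      rcases y with _ | ⟨b, s₂⟩
      · exfalso
        simp only [List.nil_append] at hy2
        have : true ∈ List.replicate F false := by
          rw [← hy2, hdd]; simp
        simpa using List.eq_of_mem_replicate this
      · rw [List.cons_append] at hy2
        injection hy2 with hb hy2'
        subst hb
        -- v₂ = z ++ false :: s₂ ; d ++ t = s₂ ++ rep F
        have hs : hgt m s₂ ≤ 0 := valley_suffix_nonpos (hy1 ▸ h₂)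
        obtain ⟨e, he⟩ : d <+: s₂ :=
          dyck_prefix_of_nonpos hs hd ⟨t, hy2'⟩
        have ht : t = e ++ List.replicate F false := by
          apply List.append_cancel_left (as := d)
          rw [hy2', ← List.append_assoc, he]
        refine ⟨z ++ d ++ false :: e, ⟨z, d, e, hdn, hd, by rw [hy1, he], rfl, ?_⟩, ?_⟩
        · intro d'' hp hd''
          refine hmax d'' (hp.trans ⟨List.replicate F false, ?_⟩) hd''
          rw [ht, List.append_assoc]
        · rw [hw, hz1, ht]
          simp
  · -- a = u ++ z ; false :: (d ++ t) = z ++ (v₂ ++ rep F) : valley in the a part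
    left
    rcases z with _ | ⟨b, r'⟩
    · exfalso
      simp only [List.nil_append] at hz2
      rw [hvv] at hz2
      simp at hz2
    · rw [List.cons_append] at hz2
      injection hz2 with hb hz2'
      subst hb
      -- a = u ++ false :: r' ; d ++ t = r' ++ (v₂ ++ rep F)
      have hr'p : r' <+: d ++ t := ⟨v₂ ++ List.replicate F false, hz2'.symm⟩
      rcases le_or_gt d.length r'.length with hl | hl
      · -- B1 : d within r'
        obtain ⟨z', rfl⟩ : d <+: r' :=
          List.prefix_of_prefix_length_le ⟨t, rfl⟩ hr'p hl
        have ht : t = z' ++ (v₂ ++ List.replicate F false) := by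
          apply List.append_cancel_left (as := d)
          rw [hz2', List.append_assoc]
        refine ⟨u ++ d ++ false :: (z' ++ true :: List.replicate (m + F) false),
          ⟨u, d, z' ++ true :: List.replicate (m + F) false, hdn, hd, by rw [hz1]; simp,
            rfl, ?_⟩, ?_⟩
        · intro d' hp hd'
          have hp' : d' <+: (d ++ z') ++ true :: List.replicate (m + F) false := by
            simpa [List.append_assoc] using hp
          rcases le_or_gt d'.length (d ++ z').length with hl' | hl'
          · have hd'r : d' <+: d ++ z' :=
              List.prefix_of_prefix_length_le hp' (List.prefix_append _ _) hl'
            exact hmax d' (hd'r.trans hr'p) hd'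
          · exfalso
            obtain ⟨q, rfl⟩ : (d ++ z') <+: d' :=
              List.prefix_of_prefix_length_le (List.prefix_append _ _) hp' hl'.le
            rw [List.prefix_append_right_inj] at hp'
            have hqn : q ≠ [] := by
              intro h0; rw [h0] at hl'; simp at hl'
            obtain ⟨j, hjf, rfl, hjI⟩ := dyck_ext_peak hd' hp' hqn
            have hr0 : 0 ≤ hgt m (d ++ z') := hd'.hgt_prefix (List.prefix_append _ _)
            have hjm : m ≤ j := by omega
            have hrpre : ∀ p, p <+: d ++ z' → 0 ≤ hgt m p :=
              fun p hpp => hd'.hgt_prefix (hpp.trans (List.prefix_append _ _))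
            have hD : IsDyck m ((d ++ z') ++ v₂ ++ List.replicate (j - m) false) :=
              isDyck_mid h₂ hrpre (by push_cast; omega)
            have hDp : (d ++ z') ++ v₂ ++ List.replicate (j - m) false <+: d ++ t := by
              rw [hz2']
              simp only [List.append_assoc]
              rw [List.prefix_append_right_inj, List.prefix_append_right_inj,
                List.prefix_append_right_inj]
              exact rep_prefix false (by omega)
            have hlen := hmax _ hDp hD
            simp only [List.length_append, List.length_replicate] at hlen
            have : v₂.length ≠ 0 := by simpa using h₂n
            omega
        · rw [hw, ht]
          have hsh : u ++ d ++ false :: (z' ++ true :: List.replicate (m + F) false)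
              = (u ++ d ++ false :: z') ++ true :: List.replicate (m + F) false := by simp
          rw [hsh, star_peak']
          simp
      · -- B2 : r' proper prefix of d
        obtain ⟨q, rfl⟩ : r' <+: d :=
          List.prefix_of_prefix_length_le hr'p ⟨t, rfl⟩ hl.le
        have hqt : q ++ t = v₂ ++ List.replicate F false := by
          apply List.append_cancel_left (as := r')
          rw [← List.append_assoc]
          exact hz2'
        have hqn : q ≠ [] := by
          intro h0; rw [h0] at hl; simp at hl
        have hrpre : ∀ p, p <+: r' → 0 ≤ hgt m p :=
          fun p hpp => hd.hgt_prefix (hpp.trans (List.prefix_append _ _))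
        -- show q = v₂ ++ rep i with i = hgt r'
        obtain ⟨i, hiI, hiF, hq⟩ :
            ∃ i : ℕ, ((i : ℤ) = hgt m r') ∧ i ≤ F ∧ q = v₂ ++ List.replicate i false := by
          rcases dyck_ext h₂ hd ⟨t, hqt⟩ with ⟨hqv, hqD, hr0⟩ | ⟨i, _, hiF, rfl, hiI⟩
          · have hD : IsDyck m (r' ++ v₂ ++ List.replicate 0 false) :=
              isDyck_mid h₂ hrpre (by rw [hr0]; simp)
            have hDp : r' ++ v₂ ++ List.replicate 0 false <+: (r' ++ q) ++ t := by
              rw [hz2']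
              simp only [List.append_assoc, List.replicate, List.append_nil]
              rw [List.prefix_append_right_inj]
              exact ⟨List.replicate F false, rfl⟩
            have hlen := hmax _ hDp hD
            simp only [List.length_append, List.length_replicate] at hlen
            have hqv2 : q = v₂ := hqv.eq_of_length (by have := hqv.length_le; omega)
            exact ⟨0, by rw [hr0]; simp, by omega, by rw [hqv2]; simp⟩
          · exact ⟨i, hiI, hiF, rfl⟩
        subst hq
        have ht : t = List.replicate (F - i) false := by
          have h3 : (v₂ ++ List.replicate i false) ++ t
              = (v₂ ++ List.replicate i false) ++ List.replicate (F - i) false := by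
            rw [hqt, rep_split false hiF, List.append_assoc]
          exact List.append_cancel_left h3
        refine ⟨u ++ (r' ++ true :: List.replicate (m + i) false) ++
            false :: List.replicate (F - i) false,
          ⟨u, r' ++ true :: List.replicate (m + i) false, List.replicate (F - i) false,
            by simp, isDyck_peakext hrpre hiI, ?_, rfl, ?_⟩, ?_⟩
        · rw [hz1, show m + F = (m + i) + (F - i) by omega, List.replicate_add]
          simp
        · intro d' hp hd'
          have hreq : (r' ++ true :: List.replicate (m + i) false) ++
              List.replicate (F - i) false = r' ++ true :: List.replicate (m + F) false := by
            have hnum : m + F = (m + i) + (F - i) := by omega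
            rw [hnum, List.replicate_add]
            simp
          rw [hreq] at hp
          rcases le_or_gt d'.length r'.length with hl' | hl'
          · simp only [List.length_append, List.length_cons, List.length_replicate]
            omega
          · obtain ⟨q', rfl⟩ : r' <+: d' :=
              List.prefix_of_prefix_length_le (List.prefix_append _ _) hp hl'.le
            rw [List.prefix_append_right_inj] at hp
            have hq'n : q' ≠ [] := by
              intro h0; rw [h0] at hl'; simp at hl'
            obtain ⟨j', _, rfl, hj'I⟩ := dyck_ext_peak hd' hp hq'n
            have : j' = m + i := by omega
            subst this
            simp
        · rw [hw, ht]
          have hsh : u ++ (r' ++ (v₂ ++ List.replicate i false)) ++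
              false :: List.replicate (F - i) false
              = u ++ (r' ++ v₂ ++ List.replicate i false) ++
                false :: List.replicate (F - i) false := by simp
          have hw1' : u ++ (r' ++ true :: List.replicate (m + i) false) ++
              false :: List.replicate (F - i) false
              = (u ++ r') ++ true :: List.replicate (m + (F + 1)) false := by
            have hnum : m + (F + 1) = (m + i) + (F - i) + 1 := by omega
            rw [hnum, ← rep_glue]
            simp
          rw [hw1', star_peak']
          have hnum2 : F + 1 = i + (F - i) + 1 := by omega
          rw [hnum2, ← rep_glue]
          simp

lemma GreedyLe.isDyck {m : ℕ} {w w' : List Bool} (h : GreedyLe m w w') (hd : IsDyck m w) :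
    IsDyck m w' := by
  induction h with
  | refl => exact hd
  | tail _ hbc ih => exact hbc.isDyck ih

lemma GreedyLe.ne_nil {m : ℕ} {w w' : List Bool} (h : GreedyLe m w w') (hn : w ≠ []) :
    w' ≠ [] := by
  induction h with
  | refl => exact hn
  | tail _ hbc ih => exact hbc.ne_nil ih

lemma star_eq {m : ℕ} {v₁ : List Bool} {a : List Bool} {F : ℕ}
    (hshape : v₁ = a ++ true :: List.replicate (m + F) false) (x : List Bool) :
    star m v₁ x = a ++ x ++ List.replicate F false := by
  rw [hshape, star_peak']

lemma part_i {m : ℕ} (hm : 1 ≤ m) {v₁ v₂ w : List Bool}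
    (h₁ : IsDyck m v₁) (h₁n : v₁ ≠ []) (h₂ : IsDyck m v₂) (h₂n : v₂ ≠ [])
    (hc : GreedyCover m (star m v₁ v₂) w) :
    (∃ w₁, GreedyCover m v₁ w₁ ∧ w = star m w₁ v₂) ∨
    (∃ w₂, GreedyCover m v₂ w₂ ∧ w = star m v₁ w₂) := by
  obtain ⟨a, F, hshape, ha, hfd⟩ := dyck_decomp hm h₁ h₁n
  rw [star_eq hshape] at hc
  rcases cover_star_cases h₂ h₂n hc with ⟨w₁, hcw, rfl⟩ | ⟨w₂, hcw, rfl⟩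
  · exact Or.inl ⟨w₁, by rw [hshape]; exact hcw, rfl⟩
  · exact Or.inr ⟨w₂, hcw, (star_eq hshape w₂).symm⟩

lemma part_ii_left {m : ℕ} (hm : 1 ≤ m) {v₁ v₂ w₁ : List Bool}
    (h₁ : IsDyck m v₁) (h₁n : v₁ ≠ []) (h₂ : IsDyck m v₂) (h₂n : v₂ ≠ [])
    (hc : GreedyCover m v₁ w₁) :
    GreedyCover m (star m v₁ v₂) (star m w₁ v₂) := by
  obtain ⟨a, F, hshape, ha, hfd⟩ := dyck_decomp hm h₁ h₁n
  rw [star_eq hshape]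
  exact cover_left h₂ h₂n (hshape ▸ hc)

lemma part_ii_right {m : ℕ} (hm : 1 ≤ m) {v₁ v₂ w₂ : List Bool}
    (h₁ : IsDyck m v₁) (h₁n : v₁ ≠ []) (h₂ : IsDyck m v₂)
    (hc : GreedyCover m v₂ w₂) :
    GreedyCover m (star m v₁ v₂) (star m v₁ w₂) := by
  obtain ⟨a, F, hshape, ha, hfd⟩ := dyck_decomp hm h₁ h₁n
  rw [star_eq hshape, star_eq hshape]
  exact cover_right a F h₂ hc

lemma le_star_left {m : ℕ} (hm : 1 ≤ m) {v₁ w₁ v₂ : List Bool}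
    (h₁ : IsDyck m v₁) (h₁n : v₁ ≠ []) (h₂ : IsDyck m v₂) (h₂n : v₂ ≠ [])
    (h : GreedyLe m v₁ w₁) :
    GreedyLe m (star m v₁ v₂) (star m w₁ v₂) := by
  induction h with
  | refl => exact Relation.ReflTransGen.refl
  | @tail b c hab hbc ih =>
    exact ih.tail (part_ii_left hm (GreedyLe.isDyck hab h₁) (GreedyLe.ne_nil hab h₁n) h₂ h₂n hbc)

lemma le_star_right {m : ℕ} (hm : 1 ≤ m) {v₁ v₂ w₂ : List Bool}
    (h₁ : IsDyck m v₁) (h₁n : v₁ ≠ []) (h₂ : IsDyck m v₂)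
    (h : GreedyLe m v₂ w₂) :
    GreedyLe m (star m v₁ v₂) (star m v₁ w₂) := by
  induction h with
  | refl => exact Relation.ReflTransGen.refl
  | @tail b c hab hbc ih =>
    exact ih.tail (part_ii_right hm h₁ h₁n (GreedyLe.isDyck hab h₂) hbc)

lemma le_star_cases {m : ℕ} (hm : 1 ≤ m) {s w : List Bool} (h : GreedyLe m s w) :
    ∀ v₁ v₂ : List Bool, IsDyck m v₁ → v₁ ≠ [] → IsDyck m v₂ → v₂ ≠ [] →
      s = star m v₁ v₂ →
      ∃ w₁ w₂, GreedyLe m v₁ w₁ ∧ GreedyLe m v₂ w₂ ∧ w = star m w₁ w₂ := by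
  induction h using Relation.ReflTransGen.head_induction_on with
  | refl =>
    intro v₁ v₂ _ _ _ _ hs
    exact ⟨v₁, v₂, Relation.ReflTransGen.refl, Relation.ReflTransGen.refl, hs⟩
  | head hcov _ ih =>
    intro v₁ v₂ h1 h1n h2 h2n hs
    subst hs
    rcases part_i hm h1 h1n h2 h2n hcov with ⟨w₁, hc1, rfl⟩ | ⟨w₂, hc2, rfl⟩
    · obtain ⟨w₁', w₂', hA, hB, rfl⟩ :=
        ih w₁ v₂ (hc1.isDyck h1) (hc1.ne_nil h1n) h2 h2n rfl
      exact ⟨w₁', w₂', Relation.ReflTransGen.head hc1 hA, hB, rfl⟩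
    · obtain ⟨w₁', w₂', hA, hB, rfl⟩ :=
        ih v₁ w₂ h1 h1n (hc2.isDyck h2) (hc2.ne_nil h2n) rfl
      exact ⟨w₁', w₂', hA, Relation.ReflTransGen.head hc2 hB, rfl⟩

theorem greedy_cover_star' (m : ℕ) (hm : 1 ≤ m) (v₁ v₂ : List Bool)
    (h₁ : IsDyck m v₁) (h₁n : v₁ ≠ []) (h₂ : IsDyck m v₂) (h₂n : v₂ ≠ []) :
    (∀ w : List Bool, GreedyCover m (star m v₁ v₂) w →
        (∃ w₁, GreedyCover m v₁ w₁ ∧ w = star m w₁ v₂) ∨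
        (∃ w₂, GreedyCover m v₂ w₂ ∧ w = star m v₁ w₂)) ∧
    (∀ w₁ : List Bool, GreedyCover m v₁ w₁ →
        GreedyCover m (star m v₁ v₂) (star m w₁ v₂)) ∧
    (∀ w₂ : List Bool, GreedyCover m v₂ w₂ →
        GreedyCover m (star m v₁ v₂) (star m v₁ w₂)) ∧
    (∀ w : List Bool, GreedyLe m (star m v₁ v₂) w ↔
        ∃ w₁ w₂ : List Bool, GreedyLe m v₁ w₁ ∧ GreedyLe m v₂ w₂ ∧ w = star m w₁ w₂) := by
  refine ⟨fun w hc => part_i hm h₁ h₁n h₂ h₂n hc,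
    fun w₁ hc => part_ii_left hm h₁ h₁n h₂ h₂n hc,
    fun w₂ hc => part_ii_right hm h₁ h₁n h₂ hc,
    fun w => ⟨fun h => le_star_cases hm h v₁ v₂ h₁ h₁n h₂ h₂n rfl, ?_⟩⟩
  rintro ⟨w₁, w₂, hA, hB, rfl⟩
  exact (le_star_left hm h₁ h₁n h₂ h₂n hA).trans
    (le_star_right hm (GreedyLe.isDyck hA h₁) (GreedyLe.ne_nil hA h₁n) h₂ hB)


/-- Compatibility of the product `*` with the greedy `m`-Tamari
order: (i) every cover relation from `v₁ * v₂` acts on one of the two factors;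
(ii) cover relations on the factors give cover relations on the product;
(iii) the upper ideal of `v₁ * v₂` is the set of products `w₁ * w₂` with
`v₁ ≤ w₁` and `v₂ ≤ w₂`. -/
theorem greedy_cover_star (m : ℕ) (hm : 1 ≤ m) (v₁ v₂ : List Bool)
    (h₁ : IsDyck m v₁) (h₁n : v₁ ≠ []) (h₂ : IsDyck m v₂) (h₂n : v₂ ≠ []) :
    -- (i)
    (∀ w : List Bool, GreedyCover m (star m v₁ v₂) w →
        (∃ w₁, GreedyCover m v₁ w₁ ∧ w = star m w₁ v₂) ∨
        (∃ w₂, GreedyCover m v₂ w₂ ∧ w = star m v₁ w₂)) ∧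
    -- (ii)
    (∀ w₁ : List Bool, GreedyCover m v₁ w₁ →
        GreedyCover m (star m v₁ v₂) (star m w₁ v₂)) ∧
    (∀ w₂ : List Bool, GreedyCover m v₂ w₂ →
        GreedyCover m (star m v₁ v₂) (star m v₁ w₂)) ∧
    -- (iii)
    (∀ w : List Bool, GreedyLe m (star m v₁ v₂) w ↔
        ∃ w₁ w₂ : List Bool, GreedyLe m v₁ w₁ ∧ GreedyLe m v₂ w₂ ∧ w = star m w₁ w₂) :=
  greedy_cover_star' m hm v₁ v₂ h₁ h₁n h₂ h₂n
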